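/- For every positive integer n, Int_ℚ(A_n, 𝒜_n) = ⋂_{K} Int_ℚ(O_K), where the intersection runs over all number fields K of degree exactly n; that is, f ∈ ℚ[X] maps every algebraic integer of degree exactly n to an algebraic integer if and only if f(O_K) ⊆ O_K for every number field K of degree n. -/

import Mathlib

open Polynomial IntermediateField

lemma newton_aux {C : Type*} [CommRing C] [IsDomain C] (D : ℕ) :
    ∀ (p : C[X]), p.natDegree ≤ D → ∀ a : ℤ,
      (∀ i : ℕ, i ≤ D → IsIntegral ℤ (p.eval ((a + i : ℤ) : C))) →
      ∀ m : ℤ, IsIntegral ℤ (p.eval ((m : ℤ) : C)) := by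
  induction D with
  | zero =>
    intro p hp a h m
    obtain ⟨c, rfl⟩ := natDegree_eq_zero.mp (Nat.le_zero.mp hp)
    simpa using h 0 le_rfl
  | succ D IH =>
    intro p hp a h m
    set q := p.comp (X + 1) - p with hq
    have hqeval : ∀ k : ℤ, q.eval ((k : ℤ) : C) = p.eval ((k + 1 : ℤ) : C) - p.eval ((k : ℤ) : C) := by
      intro k
      simp [hq, eval_comp]
    have hX1 : (X + 1 : C[X]) = X + Polynomial.C 1 := by simp
    have hqdeg : q.natDegree ≤ D := by
      by_cases hp0 : p.natDegree = 0
      · obtain ⟨c, rfl⟩ := natDegree_eq_zero.mp hp0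
        simp [hq]
      · by_cases hq0 : q = 0
        · simp [hq0]
        · have hpne : p ≠ 0 := fun hz => hp0 (by simp [hz])
          have hXdeg : (X + 1 : C[X]).natDegree = 1 := by rw [hX1, natDegree_X_add_C]
          have hcomp_deg : (p.comp (X + 1)).natDegree = p.natDegree := by
            rw [natDegree_comp, hXdeg, mul_one]
          have hlc : (p.comp (X + 1)).leadingCoeff = p.leadingCoeff := by
            rw [leadingCoeff_comp (by rw [hXdeg]; exact one_ne_zero)]
            simp [hX1, (monic_X_add_C (1 : C)).leadingCoeff]
          have hcomp_ne : p.comp (X + 1) ≠ 0 := by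
            intro hz
            apply hpne
            rw [← leadingCoeff_eq_zero, ← hlc, hz, leadingCoeff_zero]
          have hdeg_eq : (p.comp (X + 1)).degree = p.degree := by
            rw [degree_eq_natDegree hcomp_ne, degree_eq_natDegree hpne, hcomp_deg]
          have hlt : q.degree < p.degree := by
            have := degree_sub_lt hdeg_eq hcomp_ne hlc
            rwa [hdeg_eq] at this
          have : q.natDegree < p.natDegree := natDegree_lt_natDegree hq0 hlt
          omega
    have hqint : ∀ k : ℤ, IsIntegral ℤ (q.eval ((k : ℤ) : C)) := by
      apply IH q hqdeg a
      intro i hi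
      have h1 := h (i + 1) (by omega)
      have h2 := h i (by omega)
      rw [hqeval, show (a + (i : ℤ) + 1) = a + ((i + 1 : ℕ) : ℤ) by push_cast; ring]
      exact h1.sub h2
    have key : ∀ t : ℕ, IsIntegral ℤ (p.eval ((a + t : ℤ) : C)) ∧
        IsIntegral ℤ (p.eval ((a - t : ℤ) : C)) := by
      intro t
      induction t with
      | zero => constructor <;> simpa using h 0 (by omega)
      | succ t iht =>
        constructor
        · have e : p.eval ((a + (t + 1 : ℕ) : ℤ) : C)
              = p.eval ((a + t : ℤ) : C) + q.eval ((a + t : ℤ) : C) := by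
            rw [hqeval]; push_cast; ring_nf
          rw [e]
          exact iht.1.add (hqint _)
        · have e : p.eval ((a - (t + 1 : ℕ) : ℤ) : C)
              = p.eval ((a - t : ℤ) : C) - q.eval ((a - (t + 1 : ℕ) : ℤ) : C) := by
            rw [hqeval]; push_cast; ring_nf
          rw [e]
          exact iht.2.sub (hqint _)
    rcases le_total a m with hm | hm
    · have := (key (m - a).toNat).1
      rwa [show (a + ((m - a).toNat : ℕ) : ℤ) = m by omega] at this
    · have := (key (a - m).toNat).2
      rwa [show (a - ((a - m).toNat : ℕ) : ℤ) = m by omega] at this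

lemma deg_of_inj {K : Type} [Field K] [NumberField K] {n : ℕ}
    (hK : Module.finrank ℚ K = n) (y : K)
    (hinj : Function.Injective fun σ : K →ₐ[ℚ] AlgebraicClosure ℚ => σ y) :
    (minpoly ℚ y).natDegree = n := by
  have hle : (minpoly ℚ y).natDegree ≤ n := hK ▸ minpoly.natDegree_le y
  have hsep : (minpoly ℚ y).Separable := Algebra.IsSeparable.isSeparable ℚ y
  have hcard : Fintype.card ((minpoly ℚ y).rootSet (AlgebraicClosure ℚ))
      = (minpoly ℚ y).natDegree :=
    card_rootSet_eq_natDegree hsep (IsAlgClosed.splits _)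
  have hge : n ≤ (minpoly ℚ y).natDegree := by
    rw [← hcard, ← hK, ← AlgHom.card ℚ K (AlgebraicClosure ℚ)]
    refine Fintype.card_le_of_injective
      (fun σ => ⟨σ y, ?_⟩) fun σ τ hστ => hinj (congrArg Subtype.val hστ)
    rw [mem_rootSet]
    refine ⟨minpoly.ne_zero (Algebra.IsIntegral.isIntegral y), ?_⟩
    rw [Polynomial.aeval_algHom_apply, minpoly.aeval, map_zero]
  omega

theorem stmt_12 (n : ℕ) (hn : 0 < n) (f : Polynomial ℚ) :
    (∀ α : AlgebraicClosure ℚ, IsIntegral ℤ α → (minpoly ℚ α).natDegree = n →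
        IsIntegral ℤ (Polynomial.aeval α f)) ↔
      (∀ (K : Type) (_ : Field K) (_ : NumberField K), Module.finrank ℚ K = n →
        ∀ x : K, IsIntegral ℤ x → IsIntegral ℤ (Polynomial.aeval x f)) := by
  constructor
  · -- forward direction
    intro H K _ _ hK x hx
    -- a primitive element that is an algebraic integer
    obtain ⟨θ₀, hθ₀⟩ := Field.exists_primitive_element ℚ K
    have halgZ : IsAlgebraic ℤ θ₀ :=
      (IsFractionRing.isAlgebraic_iff ℤ ℚ K).mpr (Algebra.IsAlgebraic.isAlgebraic θ₀)
    obtain ⟨w, c, hc, hcw⟩ : ∃ (w : integralClosure ℤ K) (c : ℤ), c ≠ 0 ∧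
        algebraMap ℤ K c * θ₀ = w := by
      obtain ⟨c, hc, hci⟩ := halgZ.exists_integral_multiple
      exact ⟨⟨c • θ₀, hci⟩, c, hc, by simp [zsmul_eq_mul]⟩
    set θ : K := algebraMap ℤ K c * θ₀ with hθdef
    have hθint : IsIntegral ℤ θ := by rw [hcw]; exact w.2
    have hcq : ((c : ℚ)) ≠ 0 := Int.cast_ne_zero.mpr hc
    have hmem : θ₀ ∈ ℚ⟮θ⟯ := by
      have h1 : θ ∈ ℚ⟮θ⟯ := mem_adjoin_simple_self ℚ θ
      have h2 : algebraMap ℚ K ((c : ℚ))⁻¹ ∈ ℚ⟮θ⟯ := IntermediateField.algebraMap_mem _ _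
      have hrep : θ₀ = algebraMap ℚ K ((c : ℚ))⁻¹ * θ := by
        rw [hθdef, show (algebraMap ℤ K) c = algebraMap ℚ K ((c : ℚ)) by simp,
          ← mul_assoc, ← map_mul, inv_mul_cancel₀ hcq, map_one, one_mul]
      rw [hrep]
      exact mul_mem h2 h1
    have hθtop : ℚ⟮θ⟯ = ⊤ := le_antisymm le_top
      (by rw [← hθ₀]; exact adjoin_simple_le_iff.mpr hmem)
    have hθQ : IsIntegral ℚ θ := hθint.tower_top
    have hsubalg : Algebra.adjoin ℚ {θ} = ⊤ := by
      have h1 := adjoin_simple_toSubalgebra_of_isAlgebraic hθQ.isAlgebraic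
      rw [hθtop] at h1
      rw [← h1, top_toSubalgebra]
    have hθdist : ∀ σ τ : K →ₐ[ℚ] AlgebraicClosure ℚ, σ θ = τ θ → σ = τ := by
      intro σ τ hστ
      have hle : Algebra.adjoin ℚ {θ} ≤ AlgHom.equalizer σ τ :=
        Algebra.adjoin_le (Set.singleton_subset_iff.mpr hστ)
      rw [hsubalg] at hle
      exact AlgHom.ext fun z => hle (Algebra.mem_top (R := ℚ) (A := K))
    -- finiteness of the set of "bad" shifts
    have hBad : {k : ℤ | ¬ Function.Injective fun σ : K →ₐ[ℚ] AlgebraicClosure ℚ =>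
        σ x + (k : AlgebraicClosure ℚ) * σ θ}.Finite := by
      have hsub : {k : ℤ | ¬ Function.Injective fun σ : K →ₐ[ℚ] AlgebraicClosure ℚ =>
          σ x + (k : AlgebraicClosure ℚ) * σ θ} ⊆
          ⋃ (σ : K →ₐ[ℚ] AlgebraicClosure ℚ) (τ : K →ₐ[ℚ] AlgebraicClosure ℚ),
            {k : ℤ | σ ≠ τ ∧ σ x + (k : AlgebraicClosure ℚ) * σ θ
              = τ x + (k : AlgebraicClosure ℚ) * τ θ} := by
        intro k hk
        simp only [Set.mem_setOf_eq, Function.Injective, not_forall] at hk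
        obtain ⟨σ, τ, heq, hne⟩ := hk
        exact Set.mem_iUnion.mpr ⟨σ, Set.mem_iUnion.mpr ⟨τ, ⟨hne, heq⟩⟩⟩
      refine Set.Finite.subset (Set.finite_iUnion fun σ => Set.finite_iUnion fun τ => ?_) hsub
      rcases eq_or_ne σ τ with rfl | hne
      · convert Set.finite_empty
        ext k; simp
      · apply Set.Subsingleton.finite
        intro k1 hk1 k2 hk2
        have hθne : σ θ ≠ τ θ := fun h => hne (hθdist σ τ h)
        have e : ((k1 : AlgebraicClosure ℚ) - k2) * (σ θ - τ θ) = 0 := by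
          have e1 := hk1.2; have e2 := hk2.2
          ring_nf
          ring_nf at e1 e2
          linear_combination e1 - e2
        rcases mul_eq_zero.mp e with h | h
        · exact_mod_cast sub_eq_zero.mp h
        · exact absurd (sub_eq_zero.mp h) hθne
    -- pick a bound
    obtain ⟨b, hb⟩ := hBad.bddAbove
    -- a fixed embedding
    have : Nonempty (K →ₐ[ℚ] AlgebraicClosure ℚ) := by
      have := AlgHom.card ℚ K (AlgebraicClosure ℚ)
      rw [hK] at this
      exact Fintype.card_pos_iff.mp (this ▸ hn)
    obtain ⟨σ₀⟩ := this
    set A := σ₀ x with hA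
    set B := σ₀ θ with hB
    set p : (AlgebraicClosure ℚ)[X] :=
      (f.map (algebraMap ℚ (AlgebraicClosure ℚ))).comp
        (Polynomial.C A + Polynomial.C B * X) with hp
    have hpeval : ∀ k : ℤ, p.eval ((k : ℤ) : AlgebraicClosure ℚ)
        = aeval (σ₀ (x + (k : K) * θ)) f := by
      intro k
      have h1 : σ₀ (x + (k : K) * θ) = A + B * (k : AlgebraicClosure ℚ) := by
        rw [map_add, map_mul, map_intCast]; ring
      rw [h1]
      simp [hp, eval_comp, eval_map, ← aeval_def]
    have hpdeg : p.natDegree ≤ f.natDegree := by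
      refine le_trans natDegree_comp_le ?_
      have : (Polynomial.C A + Polynomial.C B * X).natDegree ≤ 1 := by
        refine le_trans (natDegree_add_le _ _) ?_
        simp only [natDegree_C, max_le_iff]
        exact ⟨Nat.zero_le _, le_trans (natDegree_mul_le) (by simp)⟩
      calc (f.map (algebraMap ℚ (AlgebraicClosure ℚ))).natDegree
            * (Polynomial.C A + Polynomial.C B * X).natDegree
          ≤ f.natDegree * 1 := by
            apply Nat.mul_le_mul _ this
            exact le_of_eq (natDegree_map _)
        _ = f.natDegree := mul_one _
    have hpts : ∀ i : ℕ, i ≤ f.natDegree →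
        IsIntegral ℤ (p.eval (((b + 1 : ℤ) + i : ℤ) : AlgebraicClosure ℚ)) := by
      intro i hi
      set k : ℤ := b + 1 + i with hk
      have hknotbad : k ∉ {k : ℤ | ¬ Function.Injective fun σ : K →ₐ[ℚ] AlgebraicClosure ℚ =>
          σ x + (k : AlgebraicClosure ℚ) * σ θ} := by
        intro hmem
        have := hb hmem
        omega
      have hinj : Function.Injective fun σ : K →ₐ[ℚ] AlgebraicClosure ℚ =>
          σ x + (k : AlgebraicClosure ℚ) * σ θ := by
        by_contra hcon
        exact hknotbad hcon
      set y : K := x + (k : K) * θ with hy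
      have hyinj : Function.Injective fun σ : K →ₐ[ℚ] AlgebraicClosure ℚ => σ y := by
        have : (fun σ : K →ₐ[ℚ] AlgebraicClosure ℚ => σ y)
            = fun σ => σ x + (k : AlgebraicClosure ℚ) * σ θ := by
          funext σ
          rw [hy, map_add, map_mul, map_intCast]
        rw [this]
        exact hinj
      have hyint : IsIntegral ℤ y := by
        refine hx.add (IsIntegral.mul ?_ hθint)
        have : ((k : ℤ) : K) = algebraMap ℤ K k := by simp
        rw [this]
        exact isIntegral_algebraMap
      have hydeg : (minpoly ℚ y).natDegree = n := deg_of_inj hK y hyinj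
      have hα : IsIntegral ℤ (σ₀ y) := hyint.map (σ₀.restrictScalars ℤ)
      have hαdeg : (minpoly ℚ (σ₀ y)).natDegree = n := by
        rw [minpoly.algHom_eq σ₀ σ₀.injective y, hydeg]
      have := H (σ₀ y) hα hαdeg
      rwa [hpeval k]
    have h0 := newton_aux f.natDegree p hpdeg (b + 1) hpts 0
    rw [hpeval 0] at h0
    have h0' : σ₀ (aeval x f) = σ₀ (x + (0 : K) * θ) |> fun _ => True := trivial
    have hax : σ₀ (x + ((0 : ℤ) : K) * θ) = σ₀ x := by push_cast; ring_nf
    rw [hax] at h0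
    rw [Polynomial.aeval_algHom_apply] at h0
    exact (isIntegral_algHom_iff (σ₀.restrictScalars ℤ) σ₀.injective).mp h0
  · -- reverse direction
    intro H α hα hdeg
    have hαQ : IsIntegral ℚ α := hα.tower_top
    haveI : FiniteDimensional ℚ ℚ⟮α⟯ := adjoin.finiteDimensional hαQ
    haveI : NumberField ℚ⟮α⟯ := ⟨⟩
    have hrank : Module.finrank ℚ ℚ⟮α⟯ = n := by rw [adjoin.finrank hαQ, hdeg]
    have hgen : IsIntegral ℤ (AdjoinSimple.gen ℚ α) := by
      refine (isIntegral_algHom_iff ((ℚ⟮α⟯.val).restrictScalars ℤ)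
        Subtype.val_injective).mp ?_
      exact hα
    have hres := H ℚ⟮α⟯ inferInstance inferInstance hrank (AdjoinSimple.gen ℚ α) hgen
    have hmap : IsIntegral ℤ ((ℚ⟮α⟯.val.restrictScalars ℤ) (aeval (AdjoinSimple.gen ℚ α) f)) :=
      hres.map _
    rwa [show ((ℚ⟮α⟯.val.restrictScalars ℤ) (aeval (AdjoinSimple.gen ℚ α) f))
      = aeval α f from by
        rw [show ((ℚ⟮α⟯.val.restrictScalars ℤ) (aeval (AdjoinSimple.gen ℚ α) f))
          = ℚ⟮α⟯.val (aeval (AdjoinSimple.gen ℚ α) f) from rfl,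
          ← Polynomial.aeval_algHom_apply]
        rfl] at hmap
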